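/- Let g ∈ 𝓗^∞(B, ℓ_∞) be a bounded holomorphic function on the open unit ball B of a complex Banach space with values in ℓ_∞, with ‖g(x)‖ ≤ 1 for all x ∈ B, writing g = (g_n)_n with each g_n : B → ℂ holomorphic. Then g = (g_n) is an extreme point of the closed unit ball of 𝓗^∞(B, ℓ_∞) if and only if g_n is an extreme point of the closed unit ball of 𝓗^∞(B) for every n. -/
import Mathlib


open Metric

theorem stmt_18 {E : Type*} [NormedAddCommGroup E] [NormedSpace ℂ E]
    (g : ℕ → E → ℂ) (hg : ∀ n, DifferentiableOn ℂ (g n) (ball (0:E) 1))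
    (hgb : ∀ x ∈ ball (0:E) 1, ∀ n, ‖g n x‖ ≤ 1) :
    -- `g` is an extreme point of the closed unit ball of `𝓗^∞(B, ℓ_∞)`
    (∀ f h : ℕ → E → ℂ,
        (∀ n, DifferentiableOn ℂ (f n) (ball (0:E) 1)) →
        (∀ x ∈ ball (0:E) 1, ∀ n, ‖f n x‖ ≤ 1) →
        (∀ n, DifferentiableOn ℂ (h n) (ball (0:E) 1)) →
        (∀ x ∈ ball (0:E) 1, ∀ n, ‖h n x‖ ≤ 1) →
        (∀ n, ∀ x ∈ ball (0:E) 1, g n x = (f n x + h n x) / 2) →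
        (∀ n, ∀ x ∈ ball (0:E) 1, f n x = h n x))
    ↔
    -- each `g n` is an extreme point of the closed unit ball of `𝓗^∞(B)`
    (∀ n, ∀ f h : E → ℂ,
        DifferentiableOn ℂ f (ball (0:E) 1) → (∀ x ∈ ball (0:E) 1, ‖f x‖ ≤ 1) →
        DifferentiableOn ℂ h (ball (0:E) 1) → (∀ x ∈ ball (0:E) 1, ‖h x‖ ≤ 1) →
        (∀ x ∈ ball (0:E) 1, g n x = (f x + h x) / 2) →
        ∀ x ∈ ball (0:E) 1, f x = h x) := by
  constructor
  · intro H n f h hf hfb hh hhb hmid x hx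
    have := H (fun k => if k = n then f else g k) (fun k => if k = n then h else g k)
      (fun k => by by_cases hk : k = n <;> simp [hk, hf, hg])
      (fun y hy k => by
        by_cases hk : k = n
        · simpa [hk] using hfb y hy
        · simpa [hk] using hgb y hy k)
      (fun k => by by_cases hk : k = n <;> simp [hk, hh, hg])
      (fun y hy k => by
        by_cases hk : k = n
        · simpa [hk] using hhb y hy
        · simpa [hk] using hgb y hy k)
      (fun k y hy => by
        by_cases hk : k = n
        · simp [hk, hmid y hy]
        · simp [hk])
      n x hx
    simpa using this
  · intro H f h hf hfb hh hhb hmid n x hx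
    exact H n (f n) (h n) (hf n) (fun y hy => hfb y hy n) (hh n)
      (fun y hy => hhb y hy n) (fun y hy => hmid n y hy) x hx
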